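/- Every category is a polynomial comonad (the other direction of the Ahman–Uustalu theorem): let C be a category with object type O, and let P be the polynomial functor with positions O and directions at c given by Σ (d : O), (c ⟶ d) (all morphisms out of c). Then the maps ε_X (c, k) = k (c, 𝟙 c) and δ_X (c, k) = (c, fun (d, f) ↦ (d, fun (e, g) ↦ k (e, f ≫ g))) are natural transformations from the associated functor of P to the identity functor and to the composite of the associated functor of P with itself, respectively, and they satisfy the counit laws and coassociativity, i.e. they make the associated functor of P a comonad. -/

import Mathlib

open CategoryTheory

universe u

/-- The associated functor `Type u ⥤ Type u` of a polynomial functor. -/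
def PFunctor.toFunctor (P : PFunctor.{u}) : Type u ⥤ Type u where
  obj X := P.Obj X
  map f := TypeCat.ofHom (fun x => P.map f x)
  map_id := by intro X; apply ConcreteCategory.hom_ext; intro x; first | exact P.id_map x | rfl | simp
  map_comp := by intro X Y Z f g; apply ConcreteCategory.hom_ext; intro x; first | exact (P.map_map f g x).symm | rfl | simp

/-- The polynomial functor associated to a category: positions are objects, and directions at
`c` are the outgoing morphisms `Σ (d : O), (c ⟶ d)`. -/
def catPoly (O : Type u) [Category.{u} O] : PFunctor.{u} :=
  ⟨O, fun c => Σ d : O, (c ⟶ d)⟩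

/-- Ahman–Uustalu, the other direction: every category gives a polynomial
comonad: the stated maps are natural transformations `ε : P ⟶ Id` and `δ : P ⟶ P ∘ P` on the
associated functor of `catPoly O`, and satisfy the counit laws and coassociativity. -/
theorem stmt_17 (O : Type u) [Category.{u} O] :
    ∃ (ε : (catPoly O).toFunctor ⟶ 𝟭 (Type u))
      (δ : (catPoly O).toFunctor ⟶ (catPoly O).toFunctor ⋙ (catPoly O).toFunctor),
      (∀ (X : Type u) (c : O) (k : (Σ d : O, (c ⟶ d)) → X),
        ε.app X ⟨c, k⟩ = k ⟨c, 𝟙 c⟩) ∧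
      (∀ (X : Type u) (c : O) (k : (Σ d : O, (c ⟶ d)) → X),
        δ.app X ⟨c, k⟩ =
          ⟨c, fun df => ⟨df.1, fun eg => k ⟨eg.1, df.2 ≫ eg.2⟩⟩⟩) ∧
      (∀ X : Type u, δ.app X ≫ ε.app ((catPoly O).toFunctor.obj X) =
        𝟙 ((catPoly O).toFunctor.obj X)) ∧
      (∀ X : Type u, δ.app X ≫ (catPoly O).toFunctor.map (ε.app X) =
        𝟙 ((catPoly O).toFunctor.obj X)) ∧
      (∀ X : Type u, δ.app X ≫ δ.app ((catPoly O).toFunctor.obj X) =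
        δ.app X ≫ (catPoly O).toFunctor.map (δ.app X)) := by

  refine ⟨{ app := fun X => TypeCat.ofHom (fun (x : Σ c : O, (Σ d : O, (c ⟶ d)) → X) => x.2 ⟨x.1, 𝟙 x.1⟩),
            naturality := by intro X Y f; apply ConcreteCategory.hom_ext; intro x; rfl },
          { app := fun X => TypeCat.ofHom (fun (x : Σ c : O, (Σ d : O, (c ⟶ d)) → X) =>
              (⟨x.1, fun df => ⟨df.1, fun eg => x.2 ⟨eg.1, df.2 ≫ eg.2⟩⟩⟩ :
                (catPoly O).Obj ((catPoly O).Obj X))),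
            naturality := by intro X Y f; apply ConcreteCategory.hom_ext; intro x; rfl },
          fun X c k => rfl, fun X c k => rfl, ?_, ?_, ?_⟩
  · intro X; apply ConcreteCategory.hom_ext; intro x; obtain ⟨c, k⟩ := x
    simp only [types_comp_apply, catPoly, PFunctor.toFunctor]
    exact congrArg _ (funext fun eg => congrArg k (by obtain ⟨e, g⟩ := eg; exact congrArg (Sigma.mk e) (Category.id_comp g)))
  · intro X; apply ConcreteCategory.hom_ext; intro x; obtain ⟨c, k⟩ := x
    show (⟨c, fun df => k ⟨df.1, df.2 ≫ 𝟙 _⟩⟩ : (catPoly O).Obj X) = ⟨c, k⟩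
    exact congrArg _ (funext fun df => congrArg k (by obtain ⟨d, f⟩ := df; exact congrArg (Sigma.mk d) (@Category.comp_id O _ c d f)))
  · intro X; apply ConcreteCategory.hom_ext; intro x; obtain ⟨c, k⟩ := x
    show Sigma.mk c _ = Sigma.mk c _
    refine congrArg _ (funext fun df => ?_)
    refine congrArg _ (funext fun eg => ?_)
    refine congrArg _ (funext fun fh => congrArg k ?_)
    exact congrArg (Sigma.mk fh.1) (Category.assoc _ _ _)
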